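/- Let D be a discriminant form of type p^{ε2} with p an odd prime and ε = (−1|p). Then the space of SL_2(Z)-invariants of the Weil representation on C[D] is 2-dimensional, and it is spanned by the characteristic functions Σ_{μ ∈ H_1} e^μ and Σ_{μ ∈ H_2} e^μ of the two maximal isotropic subgroups H_1, H_2 of D. -/

import Mathlib

open scoped Classical

/-- `e(x) = exp(2πix)`; it only depends on `x` modulo 1. -/
noncomputable def e (x : ℚ) : ℂ := Complex.exp (2 * Real.pi * Complex.I * (x : ℂ))

/-- A discriminant form structure on a finite abelian group `D`: a function
`q : D → ℚ` representing a quadratic form `D → ℚ/ℤ` (all identities hold modulo 1)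
whose associated bilinear form `b(β,γ) = q(β+γ) - q(β) - q(γ) mod 1` is
nondegenerate. -/
structure IsDiscForm (D : Type*) [AddCommGroup D] [Fintype D] (q : D → ℚ) : Prop where
  quad : ∀ (n : ℤ) (γ : D), ∃ k : ℤ, q (n • γ) - (n : ℚ) ^ 2 * q γ = (k : ℚ)
  bilin : ∀ α β γ : D, ∃ k : ℤ,
    (q (α + β + γ) - q (α + β) - q γ) - (q (α + γ) - q α - q γ)
      - (q (β + γ) - q β - q γ) = (k : ℚ)
  nondeg : ∀ γ : D, (∀ β : D, ∃ k : ℤ, q (γ + β) - q γ - q β = (k : ℚ)) → γ = 0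

/-- The action of `T` in the Weil representation on `ℂ[D]`. -/
noncomputable def rhoT (D : Type) [AddCommGroup D] [Fintype D] (q : D → ℚ) :
    (D → ℂ) →ₗ[ℂ] (D → ℂ) :=
  LinearMap.pi fun γ => e (-(q γ)) • LinearMap.proj γ

/-- The action of `S` in the Weil representation on `ℂ[D]`, where `σ = e(sign(D)/8)`. -/
noncomputable def rhoS (D : Type) [AddCommGroup D] [Fintype D] (q : D → ℚ) (σ : ℂ) :
    (D → ℂ) →ₗ[ℂ] (D → ℂ) :=
  LinearMap.pi fun γ =>
    ∑ β : D, ((σ / (Real.sqrt (Fintype.card D) : ℂ)) * e (q (γ + β) - q γ - q β)) •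
      LinearMap.proj β

/-- The subspace of `SL₂(ℤ)`-invariants of the Weil representation, i.e. the vectors
fixed by the generators `S` and `T` of `SL₂(ℤ)`. -/
noncomputable def weilInvariants (D : Type) [AddCommGroup D] [Fintype D]
    (q : D → ℚ) (σ : ℂ) : Submodule ℂ (D → ℂ) :=
  LinearMap.ker (rhoT D q - LinearMap.id) ⊓ LinearMap.ker (rhoS D q σ - LinearMap.id)

/-! ### Auxiliary lemmas -/

lemma e_add' (x y : ℚ) : e (x + y) = e x * e y := by
  simp [e, mul_add, Complex.exp_add]

lemma e_zero' : e 0 = 1 := by simp [e]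

lemma e_int' (k : ℤ) : e (k : ℚ) = 1 := by
  simp only [e]
  rw [Complex.exp_eq_one_iff]
  exact ⟨k, by push_cast; ring⟩

lemma e_eq_of_sub_int' {a b : ℚ} (k : ℤ) (h : a - b = (k : ℚ)) : e a = e b := by
  have : a = b + (k:ℚ) := by linarith
  rw [this, e_add', e_int', mul_one]

/-- The standard additive character of `ZMod p`. -/
noncomputable def E (p : ℕ) [Fact p.Prime] (c : ZMod p) : ℂ := e ((c.val : ℚ) / p)

lemma hp0' (p : ℕ) [Fact p.Prime] : (p : ℚ) ≠ 0 :=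
  Nat.cast_ne_zero.mpr (Fact.out (p := p.Prime)).pos.ne'

lemma E_int (p : ℕ) [Fact p.Prime] (m : ℤ) : e ((m : ℚ) / p) = E p ((m : ZMod p)) := by
  haveI : NeZero p := ⟨(Fact.out (p := p.Prime)).pos.ne'⟩
  have hdvd : (p : ℤ) ∣ (m - ((m : ZMod p).val : ℤ)) := by
    have : ((m - ((m : ZMod p).val : ℤ) : ℤ) : ZMod p) = 0 := by
      push_cast
      simp [ZMod.natCast_val, ZMod.intCast_zmod_cast]
    exact (ZMod.intCast_zmod_eq_zero_iff_dvd _ p).mp this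
  obtain ⟨k, hk⟩ := hdvd
  apply e_eq_of_sub_int' k
  have hpq : (p:ℚ) ≠ 0 := hp0' p
  have hk' : (m : ℚ) - ((m : ZMod p).val : ℕ) = p * k := by
    exact_mod_cast congrArg (fun z : ℤ => (z : ℚ)) hk

  field_simp
  rw [ZMod.natCast_val] at hk'
  have hk'' := congrArg (fun z : ℤ => (z : ℚ)) hk; push_cast at hk''; linarith

lemma E_zero (p : ℕ) [Fact p.Prime] : E p 0 = 1 := by
  haveI : NeZero p := ⟨(Fact.out (p := p.Prime)).pos.ne'⟩
  simp [E, ZMod.val_zero, e_zero']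

lemma E_add (p : ℕ) [Fact p.Prime] (a b : ZMod p) : E p (a + b) = E p a * E p b := by
  haveI : NeZero p := ⟨(Fact.out (p := p.Prime)).pos.ne'⟩
  have h1 : E p (a + b) = e (((a.val + b.val : ℤ) : ℚ) / p) := by
    rw [E_int]
    congr 1
    push_cast
    simp [ZMod.natCast_val, ZMod.intCast_zmod_cast]
  rw [h1]
  have : ((a.val + b.val : ℤ) : ℚ) / p = (a.val : ℚ)/p + (b.val : ℚ)/p := by
    push_cast; ring
  rw [this, e_add']; rfl

lemma E_eq_one_iff (p : ℕ) [Fact p.Prime] (c : ZMod p) : E p c = 1 ↔ c = 0 := by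
  haveI : NeZero p := ⟨(Fact.out (p := p.Prime)).pos.ne'⟩
  constructor
  · intro h
    simp only [E, e] at h
    rw [Complex.exp_eq_one_iff] at h
    obtain ⟨n, hn⟩ := h
    have h2 : (2 * Real.pi * Complex.I) ≠ 0 := by
      simp [Real.pi_ne_zero, Complex.I_ne_zero]
    have hx : ((c.val : ℚ) / p : ℚ) = (n : ℚ) := by
      have : ((((c.val : ℚ) / p : ℚ)) : ℂ) = (n : ℂ) := by
        rw [mul_comm] at hn
        exact mul_right_cancel₀ h2 hn
      exact_mod_cast this
    have hnn : 0 ≤ (n:ℚ) := by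
      rw [← hx]; positivity
    have hlt : (n:ℚ) < 1 := by
      rw [← hx]
      rw [div_lt_one (by exact_mod_cast (Fact.out (p := p.Prime)).pos)]
      exact_mod_cast c.val_lt
    have : n = 0 := by
      have h0 : (0:ℤ) ≤ n := by exact_mod_cast hnn
      have h1 : n < 1 := by exact_mod_cast hlt
      omega
    subst this
    have : (c.val : ℚ) / p = 0 := by simpa using hx
    have : c.val = 0 := by
      rcases div_eq_zero_iff.mp this with h | h
      · exact_mod_cast h
      · exact absurd h (hp0' p)
    exact (ZMod.val_eq_zero c).mp this
  · rintro rfl; exact E_zero p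

lemma sum_E (p : ℕ) [Fact p.Prime] (c : ZMod p) :
    (∑ t : ZMod p, E p (c * t)) = if c = 0 then (p:ℂ) else 0 := by
  haveI : NeZero p := ⟨(Fact.out (p := p.Prime)).pos.ne'⟩
  split_ifs with hc
  · subst hc
    simp [E_zero]
  · have hbij : Function.Bijective (fun t : ZMod p => c * t) :=
      (Equiv.mulLeft₀ c hc).bijective
    have h1 : (∑ t : ZMod p, E p (c * t)) = ∑ u : ZMod p, E p u :=
      Fintype.sum_bijective _ hbij _ _ (fun t => rfl)
    have h2 : E p 1 * (∑ u : ZMod p, E p u) = ∑ u : ZMod p, E p u := by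
      rw [Finset.mul_sum]
      rw [← Equiv.sum_comp (Equiv.addLeft (1 : ZMod p)) (fun u => E p u)]
      exact Finset.sum_congr rfl fun u _ => (E_add p 1 u).symm
    have h3 : E p 1 ≠ 1 := by
      rw [Ne, E_eq_one_iff]
      exact one_ne_zero
    rw [h1]
    have h4 : (E p 1 - 1) * (∑ u : ZMod p, E p u) = 0 := by
      rw [sub_mul, one_mul, h2, sub_self]
    rcases mul_eq_zero.mp h4 with h | h
    · exact absurd (by rwa [sub_eq_zero] at h) h3
    · exact h

lemma rhoT_apply (D : Type) [AddCommGroup D] [Fintype D] (q : D → ℚ) (f : D → ℂ) (γ : D) :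
    rhoT D q f γ = e (-(q γ)) * f γ := rfl

lemma rhoS_apply (D : Type) [AddCommGroup D] [Fintype D] (q : D → ℚ) (σ : ℂ) (f : D → ℂ) (γ : D) :
    rhoS D q σ f γ =
      ∑ β : D, ((σ / (Real.sqrt (Fintype.card D) : ℂ)) * e (q (γ + β) - q γ - q β)) * f β := by
  simp [rhoS, LinearMap.pi_apply, LinearMap.sum_apply, LinearMap.smul_apply, LinearMap.proj_apply]

section

variable (p : ℕ) [Fact p.Prime] (q : (ZMod p × ZMod p) → ℚ)

lemma card_sqrt : ((Real.sqrt (Fintype.card (ZMod p × ZMod p)) : ℝ) : ℂ) = (p : ℂ) := by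
  haveI : NeZero p := ⟨(Fact.out (p := p.Prime)).pos.ne'⟩
  rw [Fintype.card_prod, ZMod.card]
  push_cast
  rw [Real.sqrt_mul_self (by positivity)]
  norm_cast

variable (hq : ∀ x : ZMod p × ZMod p, q x = ((x.1.val * x.2.val : ℕ) : ℚ) / (p : ℚ))
include hq

lemma e_q (γ : ZMod p × ZMod p) : e (q γ) = E p (γ.1 * γ.2) := by
  haveI : NeZero p := ⟨(Fact.out (p := p.Prime)).pos.ne'⟩
  rw [hq]
  have h1 : ((γ.1.val * γ.2.val : ℕ) : ℚ) / p = (((γ.1.val * γ.2.val : ℕ) : ℤ) : ℚ) / p := by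
    push_cast; ring
  rw [h1, E_int]
  congr 1
  push_cast
  simp [ZMod.natCast_val, ZMod.cast_id]

lemma e_negq (γ : ZMod p × ZMod p) : e (-(q γ)) = E p (-(γ.1 * γ.2)) := by
  haveI : NeZero p := ⟨(Fact.out (p := p.Prime)).pos.ne'⟩
  rw [hq]
  have h1 : -(((γ.1.val * γ.2.val : ℕ) : ℚ) / p) = ((-(γ.1.val * γ.2.val : ℕ) : ℤ) : ℚ) / p := by
    push_cast; ring
  rw [h1, E_int]
  congr 1
  push_cast
  simp [ZMod.natCast_val, ZMod.cast_id]

lemma e_bil (γ β : ZMod p × ZMod p) :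
    e (q (γ + β) - q γ - q β) = E p (γ.1 * β.2 + γ.2 * β.1) := by
  haveI : NeZero p := ⟨(Fact.out (p := p.Prime)).pos.ne'⟩
  rw [hq, hq, hq]
  have h1 : ((((γ+β).1.val * (γ+β).2.val : ℕ) : ℚ)) / p - ((γ.1.val * γ.2.val : ℕ) : ℚ) / p
      - ((β.1.val * β.2.val : ℕ) : ℚ) / p
      = ((((γ.1+β.1).val * (γ.2+β.2).val : ℤ) - γ.1.val * γ.2.val - β.1.val * β.2.val : ℤ) : ℚ) / p := by
    simp only [Prod.fst_add, Prod.snd_add]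
    push_cast
    ring
  rw [h1, E_int]
  congr 1
  push_cast
  simp only [ZMod.natCast_val, ZMod.cast_id]
  ring

end

/-- Splitting a sum over `ZMod p × ZMod p` of a function supported on the two axes. -/
lemma axes_sum (p : ℕ) [Fact p.Prime] (g : ZMod p × ZMod p → ℂ)
    (hg : ∀ β : ZMod p × ZMod p, β.1 ≠ 0 → β.2 ≠ 0 → g β = 0) :
    ∑ β : ZMod p × ZMod p, g β
      = (∑ t : ZMod p, g (t, 0)) + (∑ s : ZMod p, g (0, s)) - g (0, 0) := by
  haveI : NeZero p := ⟨(Fact.out (p := p.Prime)).pos.ne'⟩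
  rw [Fintype.sum_prod_type]
  have hrow : ∀ b1 : ZMod p, b1 ≠ 0 → (∑ b2 : ZMod p, g (b1, b2)) = g (b1, 0) := by
    intro b1 h
    exact Finset.sum_eq_single 0 (fun b2 _ hb2 => hg (b1, b2) h hb2) (by simp)
  rw [← Finset.add_sum_erase _ _ (Finset.mem_univ (0 : ZMod p))]
  rw [Finset.sum_congr rfl (fun b1 hb1 => hrow b1 (Finset.ne_of_mem_erase hb1))]
  rw [Finset.sum_erase_eq_sub (Finset.mem_univ (0 : ZMod p))]
  ring

/-- for a discriminant form of type `p^{ε2}` with `ε = (-1|p)`, i.e. the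
hyperbolic plane `(ℤ/pℤ)² ` with `q(x,y) = xy/p` generated by the isotropic elements
`γ₁ = (1,0)`, `γ₂ = (0,1)` with `(γ₁,γ₂) = 1/p`, the space of Weil invariants is
2-dimensional and is spanned by the characteristic functions of the two maximal
isotropic subgroups `⟨γ₁⟩ = {(t,0)}` and `⟨γ₂⟩ = {(0,t)}`. -/
theorem weil_invariants_hyperbolic_plane
    (p : ℕ) [Fact p.Prime] (hp : p ≠ 2)
    (q : (ZMod p × ZMod p) → ℚ)
    (hq : ∀ x : ZMod p × ZMod p, q x = ((x.1.val * x.2.val : ℕ) : ℚ) / (p : ℚ))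
    (σ : ℂ)
    (hMilgram : ∑ γ : ZMod p × ZMod p, e (q γ)
      = (Real.sqrt (Fintype.card (ZMod p × ZMod p)) : ℂ) * σ) :
    weilInvariants (ZMod p × ZMod p) q σ
      = Submodule.span ℂ
          {(fun x : ZMod p × ZMod p => if x.2 = 0 then (1 : ℂ) else 0),
           (fun x : ZMod p × ZMod p => if x.1 = 0 then (1 : ℂ) else 0)}
    ∧ Module.finrank ℂ ↥(weilInvariants (ZMod p × ZMod p) q σ) = 2 := by
  haveI : NeZero p := ⟨(Fact.out (p := p.Prime)).pos.ne'⟩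
  have hpC : (p : ℂ) ≠ 0 := Nat.cast_ne_zero.mpr (Fact.out (p := p.Prime)).pos.ne'
  have hone : (1 : ZMod p) ≠ 0 := one_ne_zero
  set χ1 : (ZMod p × ZMod p) → ℂ := fun x => if x.2 = 0 then (1 : ℂ) else 0 with hχ1
  set χ2 : (ZMod p × ZMod p) → ℂ := fun x => if x.1 = 0 then (1 : ℂ) else 0 with hχ2
  -- σ = 1
  have hσ : σ = 1 := by
    have hL : ∑ γ : ZMod p × ZMod p, e (q γ) = (p : ℂ) := by
      rw [Finset.sum_congr rfl (fun γ _ => e_q p q hq γ)]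
      rw [Fintype.sum_prod_type]
      rw [Finset.sum_congr rfl (fun x _ => sum_E p x)]
      simp
    rw [hL, card_sqrt] at hMilgram
    exact mul_left_cancel₀ hpC (by rw [mul_one]; exact hMilgram.symm)
  subst hσ
  -- membership characterization
  have hmem : ∀ f : (ZMod p × ZMod p) → ℂ,
      f ∈ weilInvariants (ZMod p × ZMod p) q 1 ↔
        ((∀ γ : ZMod p × ZMod p, E p (-(γ.1 * γ.2)) * f γ = f γ) ∧
         (∀ γ : ZMod p × ZMod p,
            (∑ β : ZMod p × ZMod p, E p (γ.1 * β.2 + γ.2 * β.1) * f β) = (p : ℂ) * f γ)) := by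
    intro f
    rw [weilInvariants, Submodule.mem_inf, LinearMap.mem_ker, LinearMap.mem_ker]
    constructor
    · rintro ⟨hT, hS⟩
      constructor
      · intro γ
        have := congr_fun hT γ
        simp only [LinearMap.sub_apply, LinearMap.id_apply, Pi.sub_apply, Pi.zero_apply,
          sub_eq_zero] at this
        rw [rhoT_apply, e_negq p q hq] at this
        exact this
      · intro γ
        have := congr_fun hS γ
        simp only [LinearMap.sub_apply, LinearMap.id_apply, Pi.sub_apply, Pi.zero_apply,
          sub_eq_zero] at this
        rw [rhoS_apply] at this
        rw [Finset.sum_congr rfl (fun β _ => by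
          rw [e_bil p q hq γ β, card_sqrt]) ] at this
        have h2 : ∑ β : ZMod p × ZMod p, (1 / (p:ℂ) * E p (γ.1 * β.2 + γ.2 * β.1)) * f β
            = f γ := this
        calc ∑ β : ZMod p × ZMod p, E p (γ.1 * β.2 + γ.2 * β.1) * f β
            = (p:ℂ) * ∑ β : ZMod p × ZMod p,
                (1 / (p:ℂ) * E p (γ.1 * β.2 + γ.2 * β.1)) * f β := by
              rw [Finset.mul_sum]
              refine Finset.sum_congr rfl (fun β _ => ?_)
              field_simp
          _ = (p:ℂ) * f γ := by rw [h2]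
    · rintro ⟨hT, hS⟩
      constructor
      · funext γ
        simp only [LinearMap.sub_apply, LinearMap.id_apply, Pi.sub_apply, Pi.zero_apply,
          sub_eq_zero]
        rw [rhoT_apply, e_negq p q hq]
        exact hT γ
      · funext γ
        simp only [LinearMap.sub_apply, LinearMap.id_apply, Pi.sub_apply, Pi.zero_apply,
          sub_eq_zero]
        rw [rhoS_apply]
        rw [Finset.sum_congr rfl (fun β _ => by rw [e_bil p q hq γ β, card_sqrt])]
        calc ∑ β : ZMod p × ZMod p, (1 / (p:ℂ) * E p (γ.1 * β.2 + γ.2 * β.1)) * f β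
            = (1/(p:ℂ)) * ∑ β : ZMod p × ZMod p, E p (γ.1 * β.2 + γ.2 * β.1) * f β := by
              rw [Finset.mul_sum]
              exact Finset.sum_congr rfl (fun β _ => by ring)
          _ = (1/(p:ℂ)) * ((p:ℂ) * f γ) := by rw [hS γ]
          _ = f γ := by field_simp
  -- the two characteristic functions are invariant
  have hχ1mem : χ1 ∈ weilInvariants (ZMod p × ZMod p) q 1 := by
    rw [hmem]
    constructor
    · intro γ
      by_cases h : γ.2 = 0
      · have hval : χ1 γ = 1 := by simp [hχ1, h]
        rw [hval, h, mul_zero, neg_zero, E_zero, one_mul]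
      · have hval : χ1 γ = 0 := by simp [hχ1, h]
        rw [hval, mul_zero]
    · intro γ
      rw [Fintype.sum_prod_type]
      have hrow : ∀ b1 : ZMod p, (∑ b2 : ZMod p, E p (γ.1 * b2 + γ.2 * b1) * χ1 (b1, b2))
          = E p (γ.2 * b1) := by
        intro b1
        rw [Finset.sum_eq_single 0 (fun b2 _ hb2 => by simp [hχ1, hb2])
          (fun h => absurd (Finset.mem_univ _) h)]
        simp [hχ1, E_add]
      rw [Finset.sum_congr rfl (fun b1 _ => hrow b1), sum_E]
      by_cases h : γ.2 = 0
      · simp [hχ1, h]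
      · simp [hχ1, h]
  have hχ2mem : χ2 ∈ weilInvariants (ZMod p × ZMod p) q 1 := by
    rw [hmem]
    constructor
    · intro γ
      by_cases h : γ.1 = 0
      · have hval : χ2 γ = 1 := by simp [hχ2, h]
        rw [hval, h, zero_mul, neg_zero, E_zero, one_mul]
      · have hval : χ2 γ = 0 := by simp [hχ2, h]
        rw [hval, mul_zero]
    · intro γ
      rw [Fintype.sum_prod_type]
      have hrow : ∀ b1 : ZMod p, b1 ≠ 0 →
          (∑ b2 : ZMod p, E p (γ.1 * b2 + γ.2 * b1) * χ2 (b1, b2)) = 0 := by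
        intro b1 hb1
        apply Finset.sum_eq_zero
        intro b2 _
        simp [hχ2, hb1]
      rw [Finset.sum_eq_single 0 (fun b1 _ hb1 => hrow b1 hb1)
        (fun h => absurd (Finset.mem_univ _) h)]
      have hterm : ∀ b2 : ZMod p, E p (γ.1 * b2 + γ.2 * 0) * χ2 ((0 : ZMod p), b2)
          = E p (γ.1 * b2) := by
        intro b2
        simp [hχ2, mul_zero, add_zero]
      rw [Finset.sum_congr rfl (fun b2 _ => hterm b2), sum_E]
      by_cases h : γ.1 = 0
      · simp [hχ2, h]
      · simp [hχ2, h]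
  -- span ⊆ invariants
  have hle1 : Submodule.span ℂ {χ1, χ2} ≤ weilInvariants (ZMod p × ZMod p) q 1 := by
    rw [Submodule.span_le]
    intro v hv
    rcases hv with rfl | hv
    · exact hχ1mem
    · rw [Set.mem_singleton_iff] at hv
      subst hv
      exact hχ2mem
  -- invariants ⊆ span
  have hle2 : weilInvariants (ZMod p × ZMod p) q 1 ≤ Submodule.span ℂ {χ1, χ2} := by
    intro f hf
    rw [hmem] at hf
    obtain ⟨hT, hS⟩ := hf
    -- support
    have hsupp : ∀ β : ZMod p × ZMod p, β.1 ≠ 0 → β.2 ≠ 0 → f β = 0 := by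
      intro β h1 h2
      have hne : E p (-(β.1 * β.2)) ≠ 1 := by
        rw [Ne, E_eq_one_iff, neg_eq_zero]
        exact mul_ne_zero h1 h2
      have := hT β
      by_contra hfβ
      exact hne (mul_right_cancel₀ hfβ (by rw [this, one_mul]))
    -- Fourier data
    set F : ZMod p → ℂ := fun d => ∑ t : ZMod p, E p (d * t) * f (t, 0) with hF
    set G : ZMod p → ℂ := fun c => ∑ s : ZMod p, E p (c * s) * f (0, s) with hG
    have key : ∀ c d : ZMod p, c ≠ 0 → d ≠ 0 → F d + G c = f (0, 0) := by
      intro c d hc hd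
      have h0 : f (c, d) = 0 := hsupp (c, d) hc hd
      have hSg : (∑ β : ZMod p × ZMod p, E p (c * β.2 + d * β.1) * f β)
          = (p:ℂ) * f (c, d) := hS (c, d)
      rw [h0, mul_zero] at hSg
      rw [axes_sum p (fun β => E p (c * β.2 + d * β.1) * f β)
        (fun β h1 h2 => by
          show E p (c * β.2 + d * β.1) * f β = 0
          rw [hsupp β h1 h2, mul_zero])] at hSg
      simp only [mul_zero, zero_add, add_zero, E_zero, one_mul] at hSg
      simp only [hF, hG]
      linear_combination hSg
    -- the value of F on nonzero d is constant
    set K : ℂ := f (0, 0) - G 1 with hK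
    have hFconst : ∀ d : ZMod p, d ≠ 0 → F d = K := by
      intro d hd
      have := key 1 d hone hd
      rw [hK]; linear_combination this
    set L : ℂ := f (0, 0) - F 1 with hL
    have hGconst : ∀ c : ZMod p, c ≠ 0 → G c = L := by
      intro c hc
      have := key c 1 hc hone
      rw [hL]; linear_combination this
    -- Fourier inversion: f is constant on each punctured axis
    have hsum_shift : ∀ t₀ : ZMod p, t₀ ≠ 0 → (∑ d : ZMod p, E p (-t₀ * d)) = 0 := by
      intro t₀ ht₀
      rw [sum_E]
      rw [if_neg (by simpa using ht₀)]
    have hrowA : ∀ t₀ : ZMod p, t₀ ≠ 0 → (p : ℂ) * f (t₀, 0) = F 0 - K := by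
      intro t₀ ht₀
      have hway1 : (∑ d : ZMod p, E p (-t₀ * d) * F d)
          = ∑ t : ZMod p, (∑ d : ZMod p, E p ((t - t₀) * d)) * f (t, 0) := by
        simp only [hF, Finset.mul_sum]
        rw [Finset.sum_comm]
        refine Finset.sum_congr rfl (fun t _ => ?_)
        rw [Finset.sum_mul]
        refine Finset.sum_congr rfl (fun d _ => ?_)
        rw [← mul_assoc, ← E_add]
        congr 2
        ring
      have hway1' : (∑ d : ZMod p, E p (-t₀ * d) * F d) = (p : ℂ) * f (t₀, 0) := by
        rw [hway1]
        rw [Finset.sum_congr rfl (fun t _ => by rw [sum_E p (t - t₀)])]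
        rw [Finset.sum_congr rfl (fun t _ => by
          have : ((t - t₀ = 0) ↔ (t = t₀)) := sub_eq_zero
          rw [if_congr this rfl rfl])]
        rw [Finset.sum_eq_single t₀ (fun t _ ht => by rw [if_neg ht, zero_mul])
          (fun h => absurd (Finset.mem_univ _) h), if_pos rfl]
      have hway2 : (∑ d : ZMod p, E p (-t₀ * d) * F d) = F 0 - K := by
        rw [← Finset.add_sum_erase _ _ (Finset.mem_univ (0 : ZMod p))]
        rw [Finset.sum_congr rfl (fun d hd => by
          rw [hFconst d (Finset.ne_of_mem_erase hd)])]
        rw [← Finset.sum_mul, Finset.sum_erase_eq_sub (Finset.mem_univ (0 : ZMod p)),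
          hsum_shift t₀ ht₀]
        simp only [mul_zero, E_zero, one_mul, zero_sub]
        ring
      rw [← hway1', hway2]
    have hrowB : ∀ s₀ : ZMod p, s₀ ≠ 0 → (p : ℂ) * f (0, s₀) = G 0 - L := by
      intro s₀ hs₀
      have hway1 : (∑ c : ZMod p, E p (-s₀ * c) * G c)
          = ∑ s : ZMod p, (∑ c : ZMod p, E p ((s - s₀) * c)) * f (0, s) := by
        simp only [hG, Finset.mul_sum]
        rw [Finset.sum_comm]
        refine Finset.sum_congr rfl (fun t _ => ?_)
        rw [Finset.sum_mul]
        refine Finset.sum_congr rfl (fun c _ => ?_)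
        rw [← mul_assoc, ← E_add]
        congr 2
        ring
      have hway1' : (∑ c : ZMod p, E p (-s₀ * c) * G c) = (p : ℂ) * f (0, s₀) := by
        rw [hway1]
        rw [Finset.sum_congr rfl (fun t _ => by rw [sum_E p (t - s₀)])]
        rw [Finset.sum_congr rfl (fun t _ => by
          have : ((t - s₀ = 0) ↔ (t = s₀)) := sub_eq_zero
          rw [if_congr this rfl rfl])]
        rw [Finset.sum_eq_single s₀ (fun t _ ht => by rw [if_neg ht, zero_mul])
          (fun h => absurd (Finset.mem_univ _) h), if_pos rfl]
      have hway2 : (∑ c : ZMod p, E p (-s₀ * c) * G c) = G 0 - L := by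
        rw [← Finset.add_sum_erase _ _ (Finset.mem_univ (0 : ZMod p))]
        rw [Finset.sum_congr rfl (fun c hc => by
          rw [hGconst c (Finset.ne_of_mem_erase hc)])]
        rw [← Finset.sum_mul, Finset.sum_erase_eq_sub (Finset.mem_univ (0 : ZMod p)),
          hsum_shift s₀ hs₀]
        simp only [mul_zero, E_zero, one_mul, zero_sub]
        ring
      rw [← hway1', hway2]
    set A : ℂ := f (1, 0) with hA
    set B : ℂ := f (0, 1) with hB
    have hAconst : ∀ t : ZMod p, t ≠ 0 → f (t, 0) = A := by
      intro t ht
      have h1 := hrowA t ht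
      have h2 := hrowA 1 hone
      rw [hA]
      exact mul_left_cancel₀ hpC (by rw [h1, h2])
    have hBconst : ∀ s : ZMod p, s ≠ 0 → f (0, s) = B := by
      intro s hs
      have h1 := hrowB s hs
      have h2 := hrowB 1 hone
      rw [hB]
      exact mul_left_cancel₀ hpC (by rw [h1, h2])
    -- F 1 and G 1
    have hsumE1 : (∑ t : ZMod p, E p (1 * t)) = 0 := by
      rw [sum_E, if_neg hone]
    have hF1 : F 1 = f (0, 0) - A := by
      simp only [hF]
      rw [← Finset.add_sum_erase _ _ (Finset.mem_univ (0 : ZMod p))]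
      rw [Finset.sum_congr rfl (fun t ht => by
        rw [hAconst t (Finset.ne_of_mem_erase ht)])]
      rw [← Finset.sum_mul, Finset.sum_erase_eq_sub (Finset.mem_univ (0 : ZMod p)), hsumE1]
      simp only [mul_zero, E_zero, one_mul]
      ring
    have hG1 : G 1 = f (0, 0) - B := by
      simp only [hG]
      rw [← Finset.add_sum_erase _ _ (Finset.mem_univ (0 : ZMod p))]
      rw [Finset.sum_congr rfl (fun s hs => by
        rw [hBconst s (Finset.ne_of_mem_erase hs)])]
      rw [← Finset.sum_mul, Finset.sum_erase_eq_sub (Finset.mem_univ (0 : ZMod p)), hsumE1]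
      simp only [mul_zero, E_zero, one_mul]
      ring
    have h00 : f (0, 0) = A + B := by
      have := key 1 1 hone hone
      rw [hF1, hG1] at this
      linear_combination this
    -- conclude f = A • χ1 + B • χ2
    have hfeq : f = A • χ1 + B • χ2 := by
      funext γ
      have hγ : γ = (γ.1, γ.2) := rfl
      by_cases h1 : γ.1 = 0
      · by_cases h2 : γ.2 = 0
        · have : γ = ((0 : ZMod p), (0 : ZMod p)) := by rw [hγ, h1, h2]
          rw [this, h00]
          simp [hχ1, hχ2]
        · have : γ = ((0 : ZMod p), γ.2) := by rw [hγ, h1]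
          rw [this]
          simp only [Pi.add_apply, Pi.smul_apply, hχ1, hχ2, smul_eq_mul]
          rw [hBconst γ.2 h2]
          simp [h2]
      · by_cases h2 : γ.2 = 0
        · have : γ = (γ.1, (0 : ZMod p)) := by rw [hγ, h2]
          rw [this]
          simp only [Pi.add_apply, Pi.smul_apply, hχ1, hχ2, smul_eq_mul]
          rw [hAconst γ.1 h1]
          simp [h1]
        · rw [hsupp γ h1 h2]
          simp only [Pi.add_apply, Pi.smul_apply, hχ1, hχ2, smul_eq_mul]
          simp [h1, h2]
    rw [hfeq]
    exact Submodule.add_mem _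
      (Submodule.smul_mem _ _ (Submodule.subset_span (Set.mem_insert _ _)))
      (Submodule.smul_mem _ _ (Submodule.subset_span (Set.mem_insert_of_mem _ rfl)))
  have heq : weilInvariants (ZMod p × ZMod p) q 1 = Submodule.span ℂ {χ1, χ2} :=
    le_antisymm hle2 hle1
  refine ⟨heq, ?_⟩
  rw [heq]
  -- dimension count
  have hind : LinearIndependent ℂ ![χ1, χ2] := by
    rw [LinearIndependent.pair_iff]
    intro s t hst
    have h1 := congr_fun hst ((1 : ZMod p), (0 : ZMod p))
    have h2 := congr_fun hst ((0 : ZMod p), (1 : ZMod p))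
    simp only [Pi.add_apply, Pi.smul_apply, hχ1, hχ2, smul_eq_mul, Pi.zero_apply] at h1 h2
    simp [hone] at h1 h2
    exact ⟨h1, h2⟩
  have hrange : Set.range ![χ1, χ2] = ({χ1, χ2} : Set ((ZMod p × ZMod p) → ℂ)) := by
    simp [Matrix.range_cons, Matrix.range_empty, Set.pair_comm]
  rw [← hrange]
  rw [finrank_span_eq_card hind]
  simp
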